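/- arXiv:1605.05499 — 5 statements merged into one kernel-verified Lean document; each statement's English description precedes it below -/
import Mathlib

section
/- Let G be a connected multigraph and x a real number. For all sequences (t_k) and (ζ_k) of real numbers with ζ_k ≠ 0 for all k, t_k → 0, ζ_k → 0, and t_k/ζ_k → x−1, the sequence f(G;t_k,ζ_k,1) · ζ_k^{−|V(G)|} converges to (x−1) · T(G;x,1). -/
attribute [local instance] Classical.propDecidable

/-- A multigraph: a finite vertex type, a finite edge index type, and an endpoint
map sending each edge to an unordered pair of vertices. -/
structure Multigraph where
  V : Type
  E : Type
  [finV : Fintype V]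
  [finE : Fintype E]
  ends : E → Sym2 V

attribute [instance] Multigraph.finV Multigraph.finE

namespace Multigraph

/-- Two vertices are related if some edge of `S` has them as its endpoints. -/
def rel (G : Multigraph) (S : Finset G.E) (v w : G.V) : Prop :=
  ∃ e ∈ S, G.ends e = s(v, w)

/-- `ω(S)`: the number of connected components of the spanning subgraph `(V(G), S)`. -/
noncomputable def omega (G : Multigraph) (S : Finset G.E) : ℕ :=
  Nat.card (Quotient (Relation.EqvGen.setoid (G.rel S)))

/-- `ω(G)`: the number of connected components of `G`. -/
noncomputable def omegaG (G : Multigraph) : ℕ :=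
  G.omega Finset.univ

/-- The Negami polynomial `f(G;t,x,y)`. -/
noncomputable def negami (G : Multigraph) (t x y : ℝ) : ℝ :=
  ∑ S : Finset G.E, t ^ G.omega S * x ^ S.card * y ^ (Fintype.card G.E - S.card)

/-- The Tutte polynomial `T(G;x,y)`. -/
noncomputable def tutte (G : Multigraph) (x y : ℝ) : ℝ :=
  ∑ S : Finset G.E,
    (x - 1) ^ (G.omega S - G.omegaG) *
      (y - 1) ^ (G.omega S + S.card - Fintype.card G.V)

end Multigraph

/-- The setoid on `V` extending a setoid `A` on the subset `U`: its nontrivial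
classes are exactly the blocks of `A`. -/
def extendSetoid {V : Type} (U : Set V) (A : Setoid U) : Setoid V where
  r v w := v = w ∨ ∃ (hv : v ∈ U) (hw : w ∈ U), A.r ⟨v, hv⟩ ⟨w, hw⟩
  iseqv := by
    constructor
    · exact fun v => Or.inl rfl
    · rintro v w (rfl | ⟨hv, hw, h⟩)
      · exact Or.inl rfl
      · exact Or.inr ⟨hw, hv, A.symm h⟩
    · rintro v w z (rfl | ⟨hv, hw, h⟩) (rfl | ⟨hw', hz, h'⟩)
      · exact Or.inl rfl
      · exact Or.inr ⟨hw', hz, h'⟩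
      · exact Or.inr ⟨hv, hw, h⟩
      · exact Or.inr ⟨hv, hz, A.trans h h'⟩

namespace Multigraph

/-- The contraction `K/A` of a multigraph `K` by a partition `A` of a subset `U` of
its vertices: all vertices in a common block of `A` are identified. -/
noncomputable def contract (K : Multigraph) {U : Set K.V} (A : Setoid U) : Multigraph where
  V := Quotient (extendSetoid U A)
  E := K.E
  finV := Fintype.ofFinite _
  finE := K.finE
  ends e := (K.ends e).map (Quotient.mk (extendSetoid U A))

/-- `P(S)`: the partition of `U` in which two vertices lie in the same block iff they
lie in the same connected component of the spanning subgraph `(V(K), S)`. -/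
def part (K : Multigraph) (U : Set K.V) (S : Finset K.E) : Setoid U :=
  Setoid.comap Subtype.val (Relation.EqvGen.setoid (K.rel S))

/-- The auxiliary Negami polynomial `f_A(K;t,x,y)`. -/
noncomputable def negamiAux (K : Multigraph) (U : Set K.V) (A : Setoid U) (t x y : ℝ) : ℝ :=
  ∑ S : Finset K.E,
    if K.part U S = A then
      t ^ (K.omega S - Nat.card (Quotient A)) * x ^ S.card *
        y ^ (Fintype.card K.E - S.card)
    else 0

/-- The auxiliary Tutte polynomial `T_A(K;x,y)`. -/
noncomputable def tutteAux (K : Multigraph) (U : Set K.V) (A : Setoid U) (x y : ℝ) : ℝ :=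
  ∑ S : Finset K.E,
    if K.part U S = A then
      (x - 1) ^ (K.omega S - Nat.card (Quotient A)) *
        (y - 1) ^ (K.omega S + S.card - Fintype.card K.V)
    else 0

end Multigraph

/-- The set of partitions of a finite type is finite. -/
instance setoidFinite {α : Type} [Finite α] : Finite (Setoid α) :=
  Finite.of_injective (fun s : Setoid α => s.r) fun a b h => by
    cases a; cases b; simp only at h; subst h; rfl

noncomputable instance setoidFintype {α : Type} [Finite α] : Fintype (Setoid α) :=
  Fintype.ofFinite _

/-- The number of blocks `|A|` of a partition (setoid) `A`. -/
noncomputable def nblocks {α : Type} (A : Setoid α) : ℕ :=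
  Nat.card (Quotient A)

/-- The matrix `T_n(t)` indexed by partitions of `α`, with `(A,B)`-entry
`t^{|A∧B|}` where `A∧B` is the finest common coarsening (the join `A ⊔ B`). -/
noncomputable def Tmat (α : Type) [Finite α] (t : ℝ) :
    Matrix (Setoid α) (Setoid α) ℝ :=
  Matrix.of fun A B => t ^ nblocks (A ⊔ B)

/-- The matrix `L_n(x)` indexed by partitions of `α`, with `(A,B)`-entry
`(x-1)^{|A∧B|-1}` if `|A∧B| + n = |A| + |B|` and `0` otherwise. -/
noncomputable def Lmat (α : Type) [Finite α] (n : ℕ) (x : ℝ) :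
    Matrix (Setoid α) (Setoid α) ℝ :=
  Matrix.of fun A B =>
    if nblocks (A ⊔ B) + n = nblocks A + nblocks B then
      (x - 1) ^ (nblocks (A ⊔ B) - 1)
    else 0

/-- The connectivity matrix `A_n` indexed by partitions of `α`, with `(A,B)`-entry
`1` if `|A∧B| = 1` and `0` otherwise. -/
noncomputable def Amat (α : Type) [Finite α] :
    Matrix (Setoid α) (Setoid α) ℝ :=
  Matrix.of fun A B => if nblocks (A ⊔ B) = 1 then (1 : ℝ) else 0

/-- `G` is an `n`-sum of `K` and `H` along `U`: `V(G) = V(K) ∪ V(H)`,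
`V(K) ∩ V(H) = U`, and `E(G)` is the disjoint union of `E(K)` and `E(H)` with the
inherited endpoint maps. -/
structure NSum (G K H : Multigraph) (U : Set G.V) where
  ιK : K.V → G.V
  ιH : H.V → G.V
  injK : Function.Injective ιK
  injH : Function.Injective ιH
  cover : Set.range ιK ∪ Set.range ιH = Set.univ
  inter : Set.range ιK ∩ Set.range ιH = U
  edgeEquiv : G.E ≃ K.E ⊕ H.E
  endsK : ∀ a, G.ends (edgeEquiv.symm (Sum.inl a)) = (K.ends a).map ιK
  endsH : ∀ a, G.ends (edgeEquiv.symm (Sum.inr a)) = (H.ends a).map ιH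

namespace NSum

variable {G K H : Multigraph} {U : Set G.V}

/-- The copy of a partition `A` of `U` on the corresponding subset of `V(K)`. -/
def pullK (σ : NSum G K H U) (A : Setoid U) : Setoid (σ.ιK ⁻¹' U : Set K.V) :=
  Setoid.comap (fun v => ⟨σ.ιK v.1, v.2⟩) A

/-- The copy of a partition `A` of `U` on the corresponding subset of `V(H)`. -/
def pullH (σ : NSum G K H U) (A : Setoid U) : Setoid (σ.ιH ⁻¹' U : Set H.V) :=
  Setoid.comap (fun v => ⟨σ.ιH v.1, v.2⟩) A

/-- The contraction `K/A` for a partition `A` of the common vertex set `U`. -/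
noncomputable def contractK (σ : NSum G K H U) (A : Setoid U) : Multigraph :=
  K.contract (σ.pullK A)

/-- The contraction `H/B` for a partition `B` of the common vertex set `U`. -/
noncomputable def contractH (σ : NSum G K H U) (B : Setoid U) : Multigraph :=
  H.contract (σ.pullH B)

end NSum


namespace Multigraph

variable (G : Multigraph)

lemma aux_omega_empty : G.omega ∅ = Fintype.card G.V := by
  have h : ∀ v w : G.V, Relation.EqvGen (G.rel ∅) v w → v = w := by
    intro v w h
    induction h with
    | rel a b h => obtain ⟨e, he, _⟩ := h; simp at he
    | refl => rfl
    | symm a b _ ih => exact ih.symm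
    | trans a b c _ _ ih1 ih2 => exact ih1.trans ih2
  have : G.V ≃ Quotient (Relation.EqvGen.setoid (G.rel ∅)) :=
    Equiv.ofBijective (Quotient.mk _)
      ⟨fun a b hab => h a b (Quotient.exact hab), Quotient.mk_surjective⟩
  rw [omega, ← Nat.card_congr this, Nat.card_eq_fintype_card]

lemma aux_omega_le_insert (e : G.E) (S : Finset G.E) :
    G.omega S ≤ G.omega (insert e S) + 1 := by
  obtain ⟨⟨a, b⟩, hab⟩ := Quot.exists_rep (G.ends e)
  have hab : G.ends e = s(a, b) := hab.symm
  set s : G.V → G.V → Prop := Relation.EqvGen (G.rel S) with hs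
  have hrefl : ∀ v, s v v := fun v => Relation.EqvGen.refl v
  have hsymm : ∀ {v w}, s v w → s w v := fun h => Relation.EqvGen.symm _ _ h
  have htrans : ∀ {v w u}, s v w → s w u → s v u := fun h h' =>
    Relation.EqvGen.trans _ _ _ h h'
  have hmono : ∀ {v w}, s v w → Relation.EqvGen (G.rel (insert e S)) v w := by
    intro v w h
    refine Relation.EqvGen.mono ?_ _ _ h
    rintro p q ⟨e', he', h'⟩
    exact ⟨e', Finset.mem_insert_of_mem he', h'⟩
  -- key: describe EqvGen of insert
  have key : ∀ v w, Relation.EqvGen (G.rel (insert e S)) v w →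
      s v w ∨ (s v a ∧ s w b) ∨ (s v b ∧ s w a) := by
    intro v w h
    induction h with
    | rel p q h =>
      obtain ⟨e', he', h'⟩ := h
      rcases Finset.mem_insert.mp he' with rfl | he'
      · rw [hab, Sym2.eq_iff] at h'
        rcases h' with ⟨rfl, rfl⟩ | ⟨rfl, rfl⟩
        · exact Or.inr (Or.inl ⟨hrefl _, hrefl _⟩)
        · exact Or.inr (Or.inr ⟨hrefl _, hrefl _⟩)
      · exact Or.inl (Relation.EqvGen.rel _ _ ⟨e', he', h'⟩)
    | refl v => exact Or.inl (hrefl v)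
    | symm p q _ ih =>
      rcases ih with h | ⟨h1, h2⟩ | ⟨h1, h2⟩
      · exact Or.inl (hsymm h)
      · exact Or.inr (Or.inr ⟨h2, h1⟩)
      · exact Or.inr (Or.inl ⟨h2, h1⟩)
    | trans p q r _ _ ih1 ih2 =>
      rcases ih1 with h | ⟨h1, h2⟩ | ⟨h1, h2⟩ <;>
        rcases ih2 with h' | ⟨h1', h2'⟩ | ⟨h1', h2'⟩
      · exact Or.inl (htrans h h')
      · exact Or.inr (Or.inl ⟨htrans h h1', h2'⟩)
      · exact Or.inr (Or.inr ⟨htrans h h1', h2'⟩)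
      · exact Or.inr (Or.inl ⟨h1, htrans (hsymm h') h2⟩)
      · exact Or.inr (Or.inl ⟨h1, h2'⟩)
      · exact Or.inl (htrans h1 (hsymm h2'))
      · exact Or.inr (Or.inr ⟨h1, htrans (hsymm h') h2⟩)
      · exact Or.inl (htrans h1 (hsymm h2'))
      · exact Or.inr (Or.inr ⟨h1, h2'⟩)
  -- injective map
  let QS := Quotient (Relation.EqvGen.setoid (G.rel S))
  let QI := Quotient (Relation.EqvGen.setoid (G.rel (insert e S)))
  let f : QS → Option QI :=
    Quotient.lift (fun v => if s v a then none else some (Quotient.mk _ v)) (by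
      intro v w hvw
      have hvw : s v w := hvw
      by_cases hva : s v a
      · rw [if_pos hva, if_pos (htrans (hsymm hvw) hva)]
      · rw [if_neg hva, if_neg (fun hwa => hva (htrans hvw hwa))]
        exact congrArg some (Quotient.sound (hmono hvw)))
  have hf : Function.Injective f := by
    intro p q
    refine Quotient.inductionOn₂ p q ?_
    intro v w h
    simp only [f, Quotient.lift_mk] at h
    by_cases hva : s v a <;> by_cases hwa : s w a
    · exact Quotient.sound (htrans hva (hsymm hwa))
    · rw [if_pos hva, if_neg hwa] at h; exact absurd h (by simp)
    · rw [if_neg hva, if_pos hwa] at h; exact absurd h (by simp)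
    · rw [if_neg hva, if_neg hwa, Option.some_inj] at h
      have h' := Quotient.exact h
      rcases key v w h' with h'' | ⟨h1, _⟩ | ⟨_, h2⟩
      · exact Quotient.sound h''
      · exact absurd h1 hva
      · exact absurd h2 hwa
  calc G.omega S ≤ Nat.card (Option QI) := Nat.card_le_card_of_injective f hf
    _ = G.omega (insert e S) + 1 := Finite.card_option

lemma aux_card_le (S : Finset G.E) : Fintype.card G.V ≤ G.omega S + S.card := by
  induction S using Finset.induction_on with
  | empty => simp [G.aux_omega_empty]
  | insert _ _ he ih =>
    rename_i e S
    rw [Finset.card_insert_of_notMem he]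
    calc Fintype.card G.V ≤ G.omega S + S.card := ih
      _ ≤ (G.omega (insert e S) + 1) + S.card :=
        Nat.add_le_add_right (G.aux_omega_le_insert e S) _
      _ = G.omega (insert e S) + (S.card + 1) := by ring

lemma aux_omega_pos [Nonempty G.V] (S : Finset G.E) : 1 ≤ G.omega S := by
  have : Nonempty (Quotient (Relation.EqvGen.setoid (G.rel S))) :=
    ⟨Quotient.mk _ (Classical.arbitrary G.V)⟩
  exact Nat.card_pos

end Multigraph

lemma aux_pow_calc (t z : ℝ) (hz : z ≠ 0) (a c n m : ℕ) (h : a + c = n + m) :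
    t ^ a * z ^ c * z ^ (-(n : ℤ)) = (t / z) ^ a * z ^ m := by
  rw [zpow_neg, zpow_natCast, div_pow]
  field_simp
  rw [mul_assoc, mul_assoc, ← pow_add, ← pow_add]
  rw [show c + a = m + n by omega]
  ring



/-- `f(G;t_k,ζ_k,1) · ζ_k^{−|V(G)|} → (x−1)·T(G;x,1)` whenever
`t_k → 0`, `ζ_k → 0` (with `ζ_k ≠ 0`) and `t_k/ζ_k → x−1`. -/
theorem negami_limit_tutte
    (G : Multigraph) (hG : G.omegaG = 1) (x : ℝ)
    (t z : ℕ → ℝ) (hz : ∀ k, z k ≠ 0)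
    (ht : Filter.Tendsto t Filter.atTop (nhds 0))
    (hz0 : Filter.Tendsto z Filter.atTop (nhds 0))
    (hratio : Filter.Tendsto (fun k => t k / z k) Filter.atTop (nhds (x - 1))) :
    Filter.Tendsto
      (fun k => G.negami (t k) (z k) 1 * z k ^ (-(Fintype.card G.V : ℤ)))
      Filter.atTop (nhds ((x - 1) * G.tutte x 1)) := by
  
  classical
  have hne : Nonempty G.V := by
    by_contra h
    rw [not_nonempty_iff] at h
    have he : IsEmpty (Quotient (Relation.EqvGen.setoid (G.rel Finset.univ))) :=
      ⟨fun q => q.exists_rep.elim fun v _ => h.false v⟩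
    have : G.omegaG = 0 := by
      rw [Multigraph.omegaG, Multigraph.omega, Nat.card_of_isEmpty]
    omega
  set n := Fintype.card G.V with hn
  have key : ∀ k, G.negami (t k) (z k) 1 * z k ^ (-(n : ℤ))
      = ∑ S : Finset G.E,
          (t k / z k) ^ G.omega S * z k ^ (G.omega S + S.card - n) := by
    intro k
    rw [Multigraph.negami, Finset.sum_mul]
    refine Finset.sum_congr rfl fun S _ => ?_
    have hle := G.aux_card_le S
    obtain ⟨m, hm⟩ := Nat.exists_eq_add_of_le hle
    rw [show G.omega S + S.card - n = m by omega, one_pow, mul_one]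
    exact aux_pow_calc _ _ (hz k) _ _ _ _ (by omega)
  have hrhs : (x - 1) * G.tutte x 1
      = ∑ S : Finset G.E,
          (x - 1) ^ G.omega S * (0 : ℝ) ^ (G.omega S + S.card - n) := by
    rw [Multigraph.tutte, Finset.mul_sum]
    refine Finset.sum_congr rfl fun S _ => ?_
    rw [hG, show (1 : ℝ) - 1 = 0 by ring, ← mul_assoc,
      show (x - 1) * (x - 1) ^ (G.omega S - 1) = (x - 1) ^ G.omega S by
        rw [← pow_succ']
        congr 1
        have := G.aux_omega_pos S
        omega]
  rw [hrhs]
  refine Filter.Tendsto.congr (fun k => (key k).symm) ?_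
  refine tendsto_finset_sum _ fun S _ => ?_
  exact (hratio.pow _).mul (hz0.pow _)
end

section
/- Let K be a multigraph with a distinguished finite subset U of its vertices, let A ∈ Γ(U), and let x be a real number. For all sequences (t_k) and (ζ_k) of real numbers with ζ_k ≠ 0 for all k, t_k → 0, ζ_k → 0, and t_k/ζ_k → x−1, the sequence f_A(K;t_k,ζ_k,1) · ζ_k^{|A|−|V(K)|} converges to T_A(K;x,1). -/
attribute [local instance] Classical.propDecidable

section Aux

open Relation

lemma eqvGen_bot {V : Type} {r : V → V → Prop} (h : ∀ a b, ¬ r a b) {a b : V}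
    (hab : Relation.EqvGen r a b) : a = b := by
  induction hab with
  | rel x y h' => exact absurd h' (h x y)
  | refl => rfl
  | symm _ _ _ ih => exact ih.symm
  | trans _ _ _ _ _ ih1 ih2 => exact ih1.trans ih2

lemma Multigraph.omega_empty (K : Multigraph) : K.omega (∅ : Finset K.E) = Fintype.card K.V := by
  rw [Multigraph.omega, ← Nat.card_eq_fintype_card]
  refine Nat.card_congr (Equiv.symm (Equiv.ofBijective (Quotient.mk _) ⟨?_, Quotient.mk_surjective⟩))
  intro a b hab
  refine eqvGen_bot ?_ (Quotient.eq''.mp hab)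
  rintro x y ⟨e, he, -⟩
  exact absurd he (Finset.notMem_empty e)

lemma Multigraph.omega_insert (K : Multigraph) (S : Finset K.E) (e : K.E) :
    K.omega S ≤ K.omega (insert e S) + 1 := by
  obtain ⟨v, w, hvw⟩ : ∃ v w, K.ends e = s(v, w) :=
    Sym2.ind (fun v w => ⟨v, w, rfl⟩) (K.ends e)
  set r₁ := Relation.EqvGen (K.rel S) with hr₁
  have hsymm : ∀ {a b}, r₁ a b → r₁ b a := fun h => EqvGen.symm _ _ h
  have htrans : ∀ {a b c}, r₁ a b → r₁ b c → r₁ a c := fun h h' => EqvGen.trans _ _ _ h h'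
  have key : ∀ a b, Relation.EqvGen (K.rel (insert e S)) a b →
      r₁ a b ∨ (r₁ a v ∧ r₁ b w) ∨ (r₁ a w ∧ r₁ b v) := by
    intro a b h
    induction h with
    | rel a b hab =>
      obtain ⟨e', he', hends⟩ := hab
      rcases Finset.mem_insert.1 he' with rfl | he'
      · rw [hvw] at hends
        rcases Sym2.eq_iff.1 hends with ⟨rfl, rfl⟩ | ⟨rfl, rfl⟩
        · exact Or.inr (Or.inl ⟨EqvGen.refl _, EqvGen.refl _⟩)
        · exact Or.inr (Or.inr ⟨EqvGen.refl _, EqvGen.refl _⟩)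
      · exact Or.inl (EqvGen.rel _ _ ⟨e', he', hends⟩)
    | refl => exact Or.inl (EqvGen.refl _)
    | symm a b _ ih =>
      rcases ih with h | ⟨h1, h2⟩ | ⟨h1, h2⟩
      · exact Or.inl (hsymm h)
      · exact Or.inr (Or.inr ⟨h2, h1⟩)
      · exact Or.inr (Or.inl ⟨h2, h1⟩)
    | trans a b c _ _ ih1 ih2 =>
      rcases ih1 with hab | ⟨hav, hbw⟩ | ⟨haw, hbv⟩ <;>
        rcases ih2 with hbc | ⟨hbv', hcw⟩ | ⟨hbw', hcv⟩
      · exact Or.inl (htrans hab hbc)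
      · exact Or.inr (Or.inl ⟨htrans hab hbv', hcw⟩)
      · exact Or.inr (Or.inr ⟨htrans hab hbw', hcv⟩)
      · exact Or.inr (Or.inl ⟨hav, htrans (hsymm hbc) hbw⟩)
      · exact Or.inr (Or.inl ⟨hav, hcw⟩)
      · exact Or.inl (htrans hav (hsymm hcv))
      · exact Or.inr (Or.inr ⟨haw, htrans (hsymm hbc) hbv⟩)
      · exact Or.inl (htrans haw (hsymm hcw))
      · exact Or.inr (Or.inr ⟨haw, hcv⟩)
  set s₁ := Relation.EqvGen.setoid (K.rel S) with hs₁
  set s₂ := Relation.EqvGen.setoid (K.rel (insert e S)) with hs₂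
  have hmono : ∀ a b, s₁.r a b → s₂.r a b := by
    intro a b h
    exact Relation.EqvGen.mono (show ∀ x y, K.rel S x y → K.rel (insert e S) x y from fun x y ⟨e', he', hxy⟩ => ⟨e', Finset.mem_insert_of_mem he', hxy⟩) a b h
  classical
  let g : Quotient s₁ → Quotient s₂ :=
    Quotient.lift (fun a => Quotient.mk s₂ a) (fun a b h => Quotient.sound (hmono a b h))
  have hg : ∀ a : K.V, g (Quotient.mk s₁ a) = Quotient.mk s₂ a := fun a => rfl
  let f : Quotient s₁ → Quotient s₂ ⊕ Unit := fun c =>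
    if c = Quotient.mk s₁ v then Sum.inr () else Sum.inl (g c)
  have hinj : Function.Injective f := by
    intro c₁ c₂ hc
    induction c₁ using Quotient.inductionOn with | h a =>
    induction c₂ using Quotient.inductionOn with | h b =>
    simp only [f] at hc
    by_cases h1 : (Quotient.mk s₁ a) = Quotient.mk s₁ v
    · by_cases h2 : (Quotient.mk s₁ b) = Quotient.mk s₁ v
      · exact h1.trans h2.symm
      · rw [if_pos h1, if_neg h2] at hc
        exact absurd hc (by simp)
    · by_cases h2 : (Quotient.mk s₁ b) = Quotient.mk s₁ v
      · rw [if_neg h1, if_pos h2] at hc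
        exact absurd hc (by simp)
      · rw [if_neg h1, if_neg h2] at hc
        have hc' : g (Quotient.mk s₁ a) = g (Quotient.mk s₁ b) := Sum.inl.inj hc
        rw [hg a, hg b] at hc'
        have hab := Quotient.exact hc'
        have h1' : ¬ r₁ a v := fun h => h1 (Quotient.sound h)
        have h2' : ¬ r₁ b v := fun h => h2 (Quotient.sound h)
        rcases key a b hab with h | ⟨ha, hb⟩ | ⟨ha, hb⟩
        · exact Quotient.sound h
        · exact absurd ha h1'
        · exact absurd hb h2'
  have hle := Nat.card_le_card_of_injective f hinj
  have hu : Nat.card Unit = 1 := Nat.card_unique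
  rw [Nat.card_sum, hu] at hle
  exact hle

lemma Multigraph.card_le_omega_add_card (K : Multigraph) (S : Finset K.E) :
    Fintype.card K.V ≤ K.omega S + S.card := by
  classical
  induction S using Finset.induction_on with
  | empty => simp [K.omega_empty]
  | @insert e S he ih =>
    rw [Finset.card_insert_of_notMem he]
    have := K.omega_insert S e
    omega

lemma Multigraph.nblocks_part_le_omega (K : Multigraph) (U : Set K.V) (S : Finset K.E) :
    Nat.card (Quotient (K.part U S)) ≤ K.omega S := by
  classical
  let g : Quotient (K.part U S) → Quotient (Relation.EqvGen.setoid (K.rel S)) :=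
    Quotient.lift (fun (a : U) => Quotient.mk (Relation.EqvGen.setoid (K.rel S)) a.val)
      (fun a b h => Quotient.sound h)
  have hg : ∀ a : U, g (Quotient.mk (K.part U S) a) =
      Quotient.mk (Relation.EqvGen.setoid (K.rel S)) a.val := fun a => rfl
  refine Nat.card_le_card_of_injective g ?_
  intro c₁ c₂ hc
  induction c₁ using Quotient.inductionOn with | h a =>
  induction c₂ using Quotient.inductionOn with | h b =>
  rw [hg a, hg b] at hc
  have h2 := Quotient.exact hc
  exact Quotient.sound h2

end Aux

/-- `f_A(K;t_k,ζ_k,1) · ζ_k^{|A|−|V(K)|} → T_A(K;x,1)` whenever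
`t_k → 0`, `ζ_k → 0` (with `ζ_k ≠ 0`) and `t_k/ζ_k → x−1`. -/
theorem negamiAux_limit_tutteAux
    (K : Multigraph) (U : Set K.V) (A : Setoid ↥U) (x : ℝ)
    (t z : ℕ → ℝ) (hz : ∀ k, z k ≠ 0)
    (ht : Filter.Tendsto t Filter.atTop (nhds 0))
    (hz0 : Filter.Tendsto z Filter.atTop (nhds 0))
    (hratio : Filter.Tendsto (fun k => t k / z k) Filter.atTop (nhds (x - 1))) :
    Filter.Tendsto
      (fun k => K.negamiAux U A (t k) (z k) 1 *
        z k ^ ((nblocks A : ℤ) - (Fintype.card K.V : ℤ)))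
      Filter.atTop (nhds (K.tutteAux U A x 1)) := by
  classical
  unfold Multigraph.negamiAux Multigraph.tutteAux
  simp_rw [Finset.sum_mul]
  apply tendsto_finset_sum
  intro S _
  by_cases hS : K.part U S = A
  · simp only [if_pos hS]
    have hA : Nat.card (Quotient A) ≤ K.omega S := hS ▸ K.nblocks_part_le_omega U S
    have hV : Fintype.card K.V ≤ K.omega S + S.card := K.card_le_omega_add_card S
    set a := K.omega S - Nat.card (Quotient A) with ha
    set m := K.omega S + S.card - Fintype.card K.V with hm
    have heq : ∀ k, t k ^ a * z k ^ S.card * (1:ℝ) ^ (Fintype.card K.E - S.card) *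
        z k ^ ((nblocks A : ℤ) - (Fintype.card K.V : ℤ)) = (t k / z k) ^ a * z k ^ m := by
      intro k
      have hzk := hz k
      rw [one_pow, mul_one, div_pow, div_mul_eq_mul_div, eq_div_iff (pow_ne_zero a hzk),
        ← zpow_natCast (z k) S.card, ← zpow_natCast (z k) m, ← zpow_natCast (z k) a,
        mul_assoc, mul_assoc, ← zpow_add₀ hzk, ← zpow_add₀ hzk]
      congr 1
      congr 1
      rw [ha, hm]
      unfold nblocks
      push_cast [Nat.cast_sub hA, Nat.cast_sub hV]
      ring
    simp_rw [heq]
    have hlim : Filter.Tendsto (fun k => (t k / z k) ^ a * z k ^ m) Filter.atTop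
        (nhds ((x - 1) ^ a * 0 ^ m)) := (hratio.pow a).mul (hz0.pow m)
    convert hlim using 2
    norm_num
  · simp only [hS, if_false, zero_mul]
    exact tendsto_const_nhds
end

section
/- Let M be a symmetric square matrix with real entries (indexed by a nonempty finite type). The matrix equation M · X · M = M has a unique solution X if and only if M is invertible (in which case the unique solution is M⁻¹). -/
attribute [local instance] Classical.propDecidable

/-- for a real symmetric matrix `M` (nonempty index), the equation
`M·X·M = M` has a unique solution iff `M` is invertible, in which case the unique
solution is `M⁻¹`. -/
theorem symmetric_matrix_generalized_inverse_unique_iff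
    {I : Type} [Fintype I] [DecidableEq I] [Nonempty I]
    (M : Matrix I I ℝ) (hM : M.transpose = M) :
    ((∃! X : Matrix I I ℝ, M * X * M = M) ↔ IsUnit M) ∧
    (IsUnit M → ∀ X : Matrix I I ℝ, M * X * M = M ↔ X = M⁻¹) := by
  have key : IsUnit M → ∀ X : Matrix I I ℝ, M * X * M = M ↔ X = M⁻¹ := by
    intro hU X
    have hdet : IsUnit M.det := (Matrix.isUnit_iff_isUnit_det M).mp hU
    constructor
    · intro h
      have : M⁻¹ * (M * X * M) * M⁻¹ = M⁻¹ * M * M⁻¹ := by rw [h]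
      calc X = (M⁻¹ * M) * X * (M * M⁻¹) := by
              rw [Matrix.nonsing_inv_mul _ hdet, Matrix.mul_nonsing_inv _ hdet,
                  Matrix.one_mul, Matrix.mul_one]
        _ = M⁻¹ * (M * X * M) * M⁻¹ := by noncomm_ring
        _ = M⁻¹ * M * M⁻¹ := by rw [h]
        _ = M⁻¹ := by rw [Matrix.nonsing_inv_mul _ hdet, Matrix.one_mul]
    · rintro rfl
      rw [Matrix.mul_nonsing_inv _ hdet, Matrix.one_mul]
  refine ⟨⟨fun ⟨X, hX, huniq⟩ => ?_, fun hU => ⟨M⁻¹, (key hU M⁻¹).mpr rfl,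
    fun Y hY => (key hU Y).mp hY⟩⟩, key⟩
  by_contra hU
  have hdet : M.det = 0 := by
    by_contra hd
    exact hU ((Matrix.isUnit_iff_isUnit_det M).mpr (isUnit_iff_ne_zero.mpr hd))
  obtain ⟨v, hv, hMv⟩ := (Matrix.exists_mulVec_eq_zero_iff).mpr hdet
  set Y := Matrix.vecMulVec v v with hY
  have hMY : M * Y = 0 := by
    ext i j
    simp only [hY, Matrix.mul_apply, Matrix.vecMulVec_apply, Matrix.zero_apply]
    have : ∑ k, M i k * (v k * v j) = (∑ k, M i k * v k) * v j := by
      rw [Finset.sum_mul]; congr 1; ext k; ring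
    rw [this]
    have : ∑ k, M i k * v k = 0 := congrFun hMv i
    rw [this, zero_mul]
  have hYne : Y ≠ 0 := by
    intro h
    apply hv
    funext i
    have := congrFun (congrFun h i) i
    simp only [hY, Matrix.vecMulVec_apply, Matrix.zero_apply] at this
    have : v i * v i = 0 := this
    exact mul_self_eq_zero.mp this
  have hsol : M * (X + Y) * M = M := by
    rw [Matrix.mul_add, hMY, add_zero]  -- careful
    exact hX
  have : X + Y = X := (huniq _ hsol).trans (huniq X hX).symm
  exact hYne (by linear_combination (norm := abel) this)
end

section
/- Let U be an n-element set with n ≥ 1, let N = |Γ(U)| (the Bell number), and for 0 ≤ i ≤ n let S(n,i) denote the number of partitions of U with exactly i blocks (so S(n,0) = 0). For a real number t, the kernel of the linear endomorphism X ↦ T_n(t) · X · T_n(t) of the space of Γ(U)-indexed real matrices has dimension N² − (Σ_{i=0}^{q} S(n,i))² if t equals an integer q with 0 ≤ q ≤ n−1, and dimension 0 otherwise. Consequently, since the equation T_n(t) · B · T_n(t) = T_n(t) has at least one solution, its solution set is a coset of this kernel of that same dimension. -/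
attribute [local instance] Classical.propDecidable

set_option linter.unusedSectionVars false

section Aux
open Polynomial Finset

variable {α : Type} [Fintype α]

lemma nblocks_eq_card (S : Setoid α) [Fintype (Quotient S)] :
    nblocks S = Fintype.card (Quotient S) := Nat.card_eq_fintype_card

lemma embHEq {β γ : Type*} {S S' : Setoid β} (h : S' = S)
    (e : Quotient S' ↪ γ) (g : Quotient S ↪ γ)
    (hx : ∀ x, e (Quotient.mk S' x) = g (Quotient.mk S x)) : HEq e g := by
  subst h
  exact heq_of_eq (by ext q; induction q using Quotient.ind; exact hx _)

/-- Functions are classified by their kernel partition and an embedding of the quotient. -/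
noncomputable def funEquivSigma (β : Type) [Fintype β] (k : ℕ) :
    (β → Fin k) ≃ Σ S : Setoid β, Quotient S ↪ Fin k where
  toFun f := ⟨Setoid.ker f,
    ⟨Quotient.lift f fun _ _ h => h,
     fun a b => Quotient.inductionOn₂ a b fun _ _ h => Quotient.sound h⟩⟩
  invFun p := fun x => p.2 (Quotient.mk p.1 x)
  left_inv f := rfl
  right_inv := by
    rintro ⟨S, g⟩
    have h : Setoid.ker (fun x => g (Quotient.mk S x)) = S := by
      ext x y
      exact ⟨fun h => Quotient.exact (g.injective h), fun h => congrArg g (Quotient.sound h)⟩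
    refine Sigma.ext h (embHEq h _ _ fun x => rfl)

lemma card_pow_eq_sum (β : Type) [Fintype β] (k : ℕ) :
    k ^ Fintype.card β = ∑ S : Setoid β, Nat.descFactorial k (nblocks S) := by
  classical
  have h := Fintype.card_congr (funEquivSigma β k)
  rw [Fintype.card_fun, Fintype.card_fin, Fintype.card_sigma] at h
  rw [h]
  refine Finset.sum_congr rfl fun S _ => ?_
  rw [Fintype.card_embedding_eq, Fintype.card_fin, nblocks_eq_card]

lemma sum_descPochhammer_eval (β : Type) [Fintype β] (t : ℝ) :
    ∑ S : Setoid β, (descPochhammer ℝ (nblocks S)).eval t = t ^ Fintype.card β := by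
  have hpq : (∑ S : Setoid β, descPochhammer ℝ (nblocks S)) = (X : ℝ[X]) ^ Fintype.card β := by
    apply Polynomial.eq_of_infinite_eval_eq
    apply Set.Infinite.mono (s := Set.range ((↑) : ℕ → ℝ))
    · rintro _ ⟨k, rfl⟩
      simp only [Set.mem_setOf_eq, eval_finset_sum, eval_pow, eval_X]
      rw [Finset.sum_congr rfl fun S _ => descPochhammer_eval_eq_descFactorial ℝ k (nblocks S)]
      rw [← Nat.cast_sum, ← card_pow_eq_sum, Nat.cast_pow]
    · exact Set.infinite_range_of_injective Nat.cast_injective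
  have := congrArg (Polynomial.eval t) hpq
  simpa [eval_finset_sum] using this

lemma descPochhammer_eval_prod (k : ℕ) (t : ℝ) :
    (descPochhammer ℝ k).eval t = ∏ j ∈ Finset.range k, (t - j) := by
  induction k with
  | zero => simp
  | succ k ih =>
    rw [descPochhammer_succ_right, Finset.prod_range_succ, ← ih]
    simp

end Aux

section Aux2
open Polynomial Finset Matrix

variable {α : Type} [Fintype α]

/-- The quotient map induced by a coarsening. -/
def mapOfLe {A B : Setoid α} (h : A ≤ B) : Quotient A → Quotient B :=
  Quotient.lift (Quotient.mk B) fun _ _ hxy => Quotient.sound (h hxy)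

lemma mapOfLe_surjective {A B : Setoid α} (h : A ≤ B) : Function.Surjective (mapOfLe h) :=
  fun b => Quotient.inductionOn b fun x => ⟨Quotient.mk A x, rfl⟩

lemma nblocks_antitone {A B : Setoid α} (h : A ≤ B) : nblocks B ≤ nblocks A :=
  Nat.card_le_card_of_surjective _ (mapOfLe_surjective h)

lemma eq_of_le_of_nblocks_le {A B : Setoid α} (h : A ≤ B) (hn : nblocks A ≤ nblocks B) :
    A = B := by
  classical
  have hcard : Fintype.card (Quotient A) = Fintype.card (Quotient B) := by
    have h1 := nblocks_antitone h
    rw [nblocks_eq_card, nblocks_eq_card] at h1 hn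
    omega
  have hbij : Function.Bijective (mapOfLe h) :=
    (Fintype.bijective_iff_surjective_and_card _).mpr ⟨mapOfLe_surjective h, hcard⟩
  refine le_antisymm h fun x y hB => ?_
  have : mapOfLe h (Quotient.mk A x) = mapOfLe h (Quotient.mk A y) := Quotient.sound hB
  exact Quotient.exact (hbij.injective this)

/-- The zeta matrix of the partition lattice. -/
noncomputable def Zmat (α : Type) [Fintype α] : Matrix (Setoid α) (Setoid α) ℝ :=
  Matrix.of fun A B => if A ≤ B then 1 else 0

lemma Zmat_blockTriangular :
    (Zmat α).BlockTriangular (fun A => -(nblocks A : ℤ)) := by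
  intro A B hlt
  simp only [neg_lt_neg_iff, Nat.cast_lt] at hlt
  have hAB : ¬ A ≤ B := fun hle => absurd (nblocks_antitone hle) (by omega)
  simp [Zmat, hAB]

lemma det_Zmat : (Zmat α).det = 1 := by
  classical
  rw [Zmat_blockTriangular.det]
  refine Finset.prod_eq_one fun a _ => ?_
  have h1 : (Zmat α).toSquareBlock (fun A => -(nblocks A : ℤ)) a = 1 := by
    ext ⟨A, hA⟩ ⟨B, hB⟩
    by_cases hAB : A = B
    · subst hAB
      simp [Matrix.toSquareBlock_def, Zmat, Matrix.one_apply]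
    · have hn : nblocks A = nblocks B := by
        replace hA : -(nblocks A : ℤ) = a := hA
        replace hB : -(nblocks B : ℤ) = a := hB
        omega
      have h2 : ¬ A ≤ B := fun hle => hAB (eq_of_le_of_nblocks_le hle hn.le)
      have h3 : (⟨A, hA⟩ : {C : Setoid α // -(nblocks C : ℤ) = a}) ≠ ⟨B, hB⟩ :=
        fun hc => hAB (congrArg Subtype.val hc)
      simp [Matrix.toSquareBlock_def, Zmat, h2, Matrix.one_apply_ne h3]
  rw [h1, Matrix.det_one]

/-- Coarsenings of `P` correspond to partitions of the set of blocks of `P`. -/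
noncomputable def coarserEquiv (P : Setoid α) :
    Setoid (Quotient P) ≃ {C : Setoid α // P ≤ C} where
  toFun S := ⟨Setoid.comap (Quotient.mk P) S,
    fun x y h => by
      show S (Quotient.mk P x) (Quotient.mk P y)
      rw [Quotient.sound h]⟩
  invFun C :=
    { r := fun a b => Quotient.liftOn₂ a b C.1.r (fun x y x' y' hx hy => by
        apply propext
        exact ⟨fun hr => C.1.trans (C.1.symm (C.2 hx)) (C.1.trans hr (C.2 hy)),
               fun hr => C.1.trans (C.2 hx) (C.1.trans hr (C.1.symm (C.2 hy)))⟩)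
      iseqv := by
        constructor
        · intro a; induction a using Quotient.ind; exact C.1.refl _
        · intro a b h
          induction a using Quotient.ind; induction b using Quotient.ind
          exact C.1.symm h
        · intro a b c h1 h2
          induction a using Quotient.ind; induction b using Quotient.ind
          induction c using Quotient.ind
          exact C.1.trans h1 h2 }
  left_inv S := by
    apply Setoid.ext
    intro a b
    induction a using Quotient.ind; induction b using Quotient.ind
    exact Iff.rfl
  right_inv C := by
    apply Subtype.ext
    apply Setoid.ext
    intro x y
    exact Iff.rfl

lemma nblocks_coarserEquiv (P : Setoid α) (S : Setoid (Quotient P)) :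
    nblocks ((coarserEquiv P S : {C : Setoid α // P ≤ C}) : Setoid α) = nblocks S := by
  apply Nat.card_congr
  refine (Setoid.comapQuotientEquiv _ _).trans ?_
  refine (Equiv.setCongr ?_).trans (Equiv.Set.univ _)
  rw [Set.range_eq_univ]
  intro q
  induction q using Quotient.ind
  rename_i b
  induction b using Quotient.ind
  rename_i x
  exact ⟨x, rfl⟩

lemma sum_over_coarser (P : Setoid α) (f : ℕ → ℝ) :
    ∑ C : Setoid α, (if P ≤ C then f (nblocks C) else 0)
      = ∑ S : Setoid (Quotient P), f (nblocks S) := by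
  classical
  rw [← Finset.sum_filter]
  rw [Finset.sum_subtype (p := fun C : Setoid α => P ≤ C)
    (Finset.univ.filter fun C : Setoid α => P ≤ C) (by simp) (fun C => f (nblocks C))]
  exact (Fintype.sum_equiv (coarserEquiv P) _ _
    (fun S => by rw [nblocks_coarserEquiv])).symm

/-- The diagonal entries: falling factorial polynomials evaluated at `t`. -/
noncomputable def dvec (α : Type) [Fintype α] (t : ℝ) (C : Setoid α) : ℝ :=
  (descPochhammer ℝ (nblocks C)).eval t

lemma Tmat_factor (t : ℝ) :
    Tmat α t = Zmat α * Matrix.diagonal (dvec α t) * (Zmat α)ᵀ := by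
  classical
  ext A B
  have hentry : ∀ C : Setoid α,
      (Zmat α * Matrix.diagonal (dvec α t)) A C * (Zmat α)ᵀ C B
        = if A ⊔ B ≤ C then (descPochhammer ℝ (nblocks C)).eval t else 0 := by
    intro C
    rw [Matrix.mul_diagonal, Matrix.transpose_apply]
    simp only [Zmat, Matrix.of_apply, dvec]
    by_cases h1 : A ≤ C <;> by_cases h2 : B ≤ C <;>
      simp [h1, h2, sup_le_iff]
  rw [Matrix.mul_apply]
  simp only [hentry]
  rw [sum_over_coarser (A ⊔ B) (fun m => (descPochhammer ℝ m).eval t)]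
  rw [sum_descPochhammer_eval]
  simp [Tmat, nblocks_eq_card]

end Aux2

section Aux3
open Polynomial Finset Matrix

variable {ι : Type} [Fintype ι] [DecidableEq ι]

/-- Conjugation `X ↦ P * X * Q` by invertible matrices, as a linear equivalence. -/
noncomputable def conjLinearEquiv (P Q : Matrix ι ι ℝ) (hP : IsUnit P.det) (hQ : IsUnit Q.det) :
    Matrix ι ι ℝ ≃ₗ[ℝ] Matrix ι ι ℝ where
  toFun X := P * X * Q
  map_add' X Y := by simp only [Matrix.mul_add, Matrix.add_mul]
  map_smul' c X := by simp only [Matrix.mul_smul, Matrix.smul_mul, RingHom.id_apply]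
  invFun Y := P⁻¹ * Y * Q⁻¹
  left_inv X := by
    simp only [← Matrix.mul_assoc, Matrix.nonsing_inv_mul P hP, Matrix.one_mul]
    rw [Matrix.mul_assoc, Matrix.mul_nonsing_inv Q hQ, Matrix.mul_one]
  right_inv Y := by
    simp only [← Matrix.mul_assoc, Matrix.mul_nonsing_inv P hP, Matrix.one_mul]
    rw [Matrix.mul_assoc, Matrix.nonsing_inv_mul Q hQ, Matrix.mul_one]

lemma conjLinearEquiv_apply (P Q : Matrix ι ι ℝ) (hP : IsUnit P.det) (hQ : IsUnit Q.det)
    (X : Matrix ι ι ℝ) : conjLinearEquiv P Q hP hQ X = P * X * Q := rfl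

/-- The restriction map to entries indexed by the support. -/
noncomputable def restrictMap (d : ι → ℝ) :
    Matrix ι ι ℝ →ₗ[ℝ] ({p : ι × ι // d p.1 ≠ 0 ∧ d p.2 ≠ 0} → ℝ) where
  toFun X := fun q => X q.1.1 q.1.2
  map_add' X Y := rfl
  map_smul' c X := rfl

lemma restrictMap_surjective (d : ι → ℝ) : Function.Surjective (restrictMap d) := by
  intro g
  refine ⟨Matrix.of fun A B => if h : d A ≠ 0 ∧ d B ≠ 0 then g ⟨(A, B), h⟩ else 0, ?_⟩
  funext q
  obtain ⟨⟨A, B⟩, h⟩ := q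
  simp only [restrictMap, LinearMap.coe_mk, AddHom.coe_mk, Matrix.of_apply]
  exact dif_pos h

lemma ker_diag_conj (d : ι → ℝ) :
    LinearMap.ker ((LinearMap.mulRight ℝ (Matrix.diagonal d)).comp
        (LinearMap.mulLeft ℝ (Matrix.diagonal d)))
      = LinearMap.ker (restrictMap d) := by
  have key : ∀ (X : Matrix ι ι ℝ) (A B : ι),
      (Matrix.diagonal d * X * Matrix.diagonal d) A B = d A * X A B * d B := fun X A B => by
    rw [Matrix.mul_diagonal, Matrix.diagonal_mul]
  ext X
  simp only [LinearMap.mem_ker, LinearMap.comp_apply, LinearMap.mulLeft_apply,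
    LinearMap.mulRight_apply]
  constructor
  · intro h
    funext q
    obtain ⟨⟨A, B⟩, hA, hB⟩ := q
    have h0 : d A * X A B * d B = 0 := by
      rw [← key X A B, h, Matrix.zero_apply]
    simp only [mul_eq_zero, hA, hB, or_false, false_or] at h0
    exact h0
  · intro h
    ext A B
    rw [key X A B, Matrix.zero_apply]
    by_cases hA : d A = 0
    · simp [hA]
    by_cases hB : d B = 0
    · simp [hB]
    have := congrFun h ⟨(A, B), hA, hB⟩
    simp only [restrictMap, LinearMap.coe_mk, AddHom.coe_mk, Pi.zero_apply] at this
    have hX : X A B = 0 := this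
    simp [hX]

/-- Main kernel dimension computation for `X ↦ (PDQ) X (PDQ)` with `P, Q` invertible. -/
lemma finrank_ker_conj (P Q : Matrix ι ι ℝ) (hP : IsUnit P.det) (hQ : IsUnit Q.det)
    (d : ι → ℝ) (T : Matrix ι ι ℝ) (hT : T = P * Matrix.diagonal d * Q) :
    Module.finrank ℝ (LinearMap.ker
        ((LinearMap.mulRight ℝ T).comp (LinearMap.mulLeft ℝ T)))
      = Fintype.card ι * Fintype.card ι
        - (Finset.univ.filter fun i => d i ≠ 0).card
          * (Finset.univ.filter fun i => d i ≠ 0).card := by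
  classical
  set D := Matrix.diagonal d
  set LD := (LinearMap.mulRight ℝ D).comp (LinearMap.mulLeft ℝ D) with hLD
  have hfact : (LinearMap.mulRight ℝ T).comp (LinearMap.mulLeft ℝ T)
      = ((conjLinearEquiv P Q hP hQ).toLinearMap.comp LD).comp
          (conjLinearEquiv Q P hQ hP).toLinearMap := by
    apply LinearMap.ext
    intro X
    simp only [LinearMap.comp_apply, LinearMap.mulLeft_apply, LinearMap.mulRight_apply,
      LinearEquiv.coe_coe, conjLinearEquiv_apply, hLD, hT]
    simp only [Matrix.mul_assoc]
  rw [hfact]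
  rw [LinearMap.ker_comp]
  have h1 : LinearMap.ker ((conjLinearEquiv P Q hP hQ).toLinearMap.comp LD)
      = LinearMap.ker LD := by
    rw [LinearMap.ker_comp, LinearEquiv.ker, Submodule.comap_bot]
  rw [h1]
  rw [Submodule.comap_equiv_eq_map_symm]
  rw [LinearEquiv.finrank_map_eq]
  rw [ker_diag_conj]
  -- rank-nullity for restrictMap
  have hrn := LinearMap.finrank_range_add_finrank_ker (restrictMap d)
  have hrange : LinearMap.range (restrictMap d) = ⊤ :=
    LinearMap.range_eq_top.mpr (restrictMap_surjective d)
  rw [hrange, finrank_top] at hrn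
  have hcodom : Module.finrank ℝ ({p : ι × ι // d p.1 ≠ 0 ∧ d p.2 ≠ 0} → ℝ)
      = (Finset.univ.filter fun i => d i ≠ 0).card
          * (Finset.univ.filter fun i => d i ≠ 0).card := by
    rw [Module.finrank_pi]
    rw [Fintype.card_subtype]
    have : (Finset.univ.filter fun p : ι × ι => d p.1 ≠ 0 ∧ d p.2 ≠ 0)
        = (Finset.univ.filter fun i => d i ≠ 0) ×ˢ (Finset.univ.filter fun i => d i ≠ 0) := by
      ext ⟨A, B⟩
      simp [Finset.mem_product]
    rw [this, Finset.card_product]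
  have hdom : Module.finrank ℝ (Matrix ι ι ℝ) = Fintype.card ι * Fintype.card ι := by
    rw [Module.finrank_matrix, Module.finrank_self, mul_one]
  rw [hcodom, hdom] at hrn
  omega

end Aux3

open Matrix in
/-- the dimension of the kernel of `X ↦ T_n(t)·X·T_n(t)`, and the
solution set of `T_n(t)·B·T_n(t) = T_n(t)` as a coset of this kernel. -/
theorem Tmat_kernel_dimension
    (U : Type) [Fintype U] (n : ℕ) (hn : 1 ≤ n) (hcard : Fintype.card U = n) (t : ℝ) :
    (∀ q : ℕ, q ≤ n - 1 → t = (q : ℝ) →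
      Module.finrank ℝ
          (LinearMap.ker
            ((LinearMap.mulRight ℝ (Tmat U t)).comp (LinearMap.mulLeft ℝ (Tmat U t)))) =
        Nat.card (Setoid U) ^ 2 -
          (∑ i ∈ Finset.range (q + 1),
            (Finset.univ.filter fun A : Setoid U => nblocks A = i).card) ^ 2) ∧
    ((¬ ∃ q : ℕ, q ≤ n - 1 ∧ t = (q : ℝ)) →
      Module.finrank ℝ
          (LinearMap.ker
            ((LinearMap.mulRight ℝ (Tmat U t)).comp (LinearMap.mulLeft ℝ (Tmat U t)))) = 0) ∧
    (∃ B₀ : Matrix (Setoid U) (Setoid U) ℝ,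
      Tmat U t * B₀ * Tmat U t = Tmat U t ∧
      {X : Matrix (Setoid U) (Setoid U) ℝ | Tmat U t * X * Tmat U t = Tmat U t} =
        {X : Matrix (Setoid U) (Setoid U) ℝ |
          X - B₀ ∈
            LinearMap.ker
              ((LinearMap.mulRight ℝ (Tmat U t)).comp (LinearMap.mulLeft ℝ (Tmat U t)))}) := by
  classical
  have hZ : IsUnit (Zmat U).det := by rw [det_Zmat]; exact isUnit_one
  have hZt : IsUnit ((Zmat U)ᵀ).det := by rw [Matrix.det_transpose, det_Zmat]; exact isUnit_one
  have hrank := finrank_ker_conj (Zmat U) ((Zmat U)ᵀ) hZ hZt (dvec U t) (Tmat U t)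
    (Tmat_factor t)
  have hdvec_zero_iff : ∀ C : Setoid U, dvec U t C = 0 ↔ ∃ j < nblocks C, t = (j : ℝ) := by
    intro C
    rw [dvec, descPochhammer_eval_prod, Finset.prod_eq_zero_iff]
    constructor
    · rintro ⟨j, hj, hj0⟩
      exact ⟨j, Finset.mem_range.mp hj, by linarith [sub_eq_zero.mp hj0]⟩
    · rintro ⟨j, hj, rfl⟩
      exact ⟨j, Finset.mem_range.mpr hj, sub_self _⟩
  have hnb_le : ∀ C : Setoid U, nblocks C ≤ n := by
    intro C
    have h1 : Nat.card (Quotient C) ≤ Nat.card U :=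
      Nat.card_le_card_of_surjective (Quotient.mk C) (fun q => Quotient.inductionOn q
        fun x => ⟨x, rfl⟩)
    rwa [show Nat.card U = n by rw [Nat.card_eq_fintype_card, hcard]] at h1
  refine ⟨?_, ?_, ?_⟩
  · -- case t = q
    intro q hq ht
    rw [hrank]
    have hfilter : (Finset.univ.filter fun C : Setoid U => dvec U t C ≠ 0)
        = Finset.univ.filter fun C : Setoid U => nblocks C ≤ q := by
      refine Finset.filter_congr fun C _ => ?_
      rw [ne_eq, hdvec_zero_iff C]
      subst ht
      constructor
      · intro h
        by_contra hlt
        exact h ⟨q, by omega, rfl⟩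
      · rintro h ⟨j, hj, hqj⟩
        have : q = j := Nat.cast_injective hqj
        omega
    have hcount : (Finset.univ.filter fun C : Setoid U => nblocks C ≤ q).card
        = ∑ i ∈ Finset.range (q + 1),
            (Finset.univ.filter fun A : Setoid U => nblocks A = i).card := by
      rw [Finset.card_eq_sum_card_fiberwise (f := nblocks) (t := Finset.range (q + 1))
        (fun C hC => Finset.mem_range.mpr (by
          have := (Finset.mem_filter.mp hC).2; omega))]
      refine Finset.sum_congr rfl fun i hi => ?_
      congr 1
      ext C
      simp only [Finset.mem_filter, Finset.mem_univ, true_and]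
      have := Finset.mem_range.mp hi
      constructor
      · rintro ⟨_, h⟩; exact h
      · intro h; exact ⟨by omega, h⟩
    rw [hfilter, hcount, Nat.card_eq_fintype_card, pow_two, pow_two]
  · -- case t not a small natural
    intro h
    rw [hrank]
    have hall : ∀ C : Setoid U, dvec U t C ≠ 0 := by
      intro C hC
      obtain ⟨j, hj, hjt⟩ := (hdvec_zero_iff C).mp hC
      have := hnb_le C
      exact h ⟨j, by omega, hjt⟩
    have : (Finset.univ.filter fun C : Setoid U => dvec U t C ≠ 0) = Finset.univ := by
      refine Finset.filter_true_of_mem fun C _ => hall C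
    rw [this]
    simp
  · -- existence of B₀ and the coset description
    set Z := Zmat U with hZdef
    set D := Matrix.diagonal (dvec U t) with hDdef
    set dp : Setoid U → ℝ := fun C => if dvec U t C = 0 then 0 else (dvec U t C)⁻¹ with hdp
    have hTBT : Tmat U t * ((Zᵀ)⁻¹ * Matrix.diagonal dp * Z⁻¹) * Tmat U t = Tmat U t := by
      rw [Tmat_factor t]
      have hfun : (fun i => dvec U t i * (dp i * dvec U t i)) = dvec U t := by
        funext i
        by_cases hi : dvec U t i = 0
        · simp [hdp, hi]
        · simp only [hdp]
          rw [if_neg hi]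
          field_simp
      have hDDD : D * (Matrix.diagonal dp * D) = D := by
        rw [hDdef, Matrix.diagonal_mul_diagonal, Matrix.diagonal_mul_diagonal, hfun]
      calc Z * D * Zᵀ * ((Zᵀ)⁻¹ * Matrix.diagonal dp * Z⁻¹) * (Z * D * Zᵀ)
          = Z * D * Zᵀ * (Zᵀ)⁻¹ * Matrix.diagonal dp * Z⁻¹ * Z * D * Zᵀ := by
            simp only [Matrix.mul_assoc]
        _ = Z * D * Matrix.diagonal dp * D * Zᵀ := by
            rw [Matrix.mul_nonsing_inv_cancel_right _ _ hZt,
              Matrix.nonsing_inv_mul_cancel_right _ _ hZ]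
        _ = Z * (D * (Matrix.diagonal dp * D)) * Zᵀ := by
            simp only [Matrix.mul_assoc]
        _ = Z * D * Zᵀ := by rw [hDDD, Matrix.mul_assoc]
    refine ⟨(Zᵀ)⁻¹ * Matrix.diagonal dp * Z⁻¹, hTBT, ?_⟩
    ext X
    simp only [Set.mem_setOf_eq, LinearMap.mem_ker, LinearMap.comp_apply,
      LinearMap.mulLeft_apply, LinearMap.mulRight_apply]
    have hexp : Tmat U t * (X - ((Zᵀ)⁻¹ * Matrix.diagonal dp * Z⁻¹)) * Tmat U t
        = Tmat U t * X * Tmat U t - Tmat U t := by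
      rw [Matrix.mul_sub, Matrix.sub_mul, hTBT]
    rw [hexp, sub_eq_zero]
end

section
/- For every n ≥ 1 and every n-element set U, the connectivity matrix A_n, indexed by Γ(U) with (A,B)-entry equal to 1 if |A∧B| = 1 and 0 otherwise, is invertible. -/
attribute [local instance] Classical.propDecidable

section AmatAux

open Polynomial

/-- Coefficient of `X` in the descending Pochhammer polynomial. -/
lemma coeff_one_descPochhammer_aux :
    ∀ k : ℕ, (descPochhammer ℝ (k+1)).coeff 1 = (-1:ℝ)^k * k.factorial
  | 0 => by simp [descPochhammer_one]
  | (k+1) => by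
    have ih := coeff_one_descPochhammer_aux k
    have h0 : (descPochhammer ℝ (k+1)).coeff 0 = 0 := by
      rw [coeff_zero_eq_eval_zero, descPochhammer_ne_zero_eval_zero ℝ (Nat.succ_ne_zero k)]
    have hX : (descPochhammer ℝ (k+1) * X).coeff 1
        = (descPochhammer ℝ (k+1)).coeff 0 := coeff_mul_X _ 0
    have hC : (((k+1 : ℕ) : ℝ[X])) = C ((k+1 : ℕ) : ℝ) := by
      rw [Polynomial.C_eq_natCast]
    rw [descPochhammer_succ_right, hC, mul_sub, coeff_sub, hX, h0, coeff_mul_C, ih,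
      Nat.factorial_succ]
    push_cast
    ring

/-- The equivalence between functions with a prescribed kernel and embeddings of the
quotient. -/
noncomputable def kerFiberEquivAux {β γ : Type} (E : Setoid β) :
    {f : β → γ // Setoid.ker f = E} ≃ (Quotient E ↪ γ) where
  toFun f := ⟨Quotient.lift f.1 (fun a b h => by rw [← f.2] at h; exact h), by
    intro x y h
    induction x using Quotient.ind
    induction y using Quotient.ind
    exact Quotient.sound (by rw [← f.2]; exact h)⟩
  invFun g := ⟨g ∘ Quotient.mk E, by
    apply Setoid.ext
    intro a b
    show g ⟦a⟧ = g ⟦b⟧ ↔ E.r a b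
    rw [g.injective.eq_iff, Quotient.eq]⟩
  left_inv f := Subtype.ext (funext fun a => rfl)
  right_inv g := by
    apply DFunLike.ext
    intro q
    induction q using Quotient.ind
    rfl

/-- Counting functions by their kernel. -/
lemma card_fun_by_kernel_aux (β : Type) [Fintype β] (m : ℕ) :
    m ^ (Fintype.card β) =
      ∑ E : Setoid β, m.descFactorial (Nat.card (Quotient E)) := by
  classical
  calc m ^ (Fintype.card β) = Fintype.card (β → Fin m) := by
        rw [Fintype.card_fun, Fintype.card_fin]
    _ = Fintype.card (Σ E : Setoid β, {f : β → Fin m // Setoid.ker f = E}) :=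
        (Fintype.card_congr (Equiv.sigmaFiberEquiv (fun f : β → Fin m => Setoid.ker f))).symm
    _ = ∑ E : Setoid β, Fintype.card {f : β → Fin m // Setoid.ker f = E} :=
        Fintype.card_sigma
    _ = ∑ E : Setoid β, m.descFactorial (Nat.card (Quotient E)) := by
        refine Finset.sum_congr rfl fun E _ => ?_
        rw [Fintype.card_congr (kerFiberEquivAux E), Fintype.card_embedding_eq,
          Fintype.card_fin, Nat.card_eq_fintype_card]

/-- The polynomial identity `∑_E (X)_{|E|} = X ^ n`. -/
lemma sum_descPochhammer_eq_aux (β : Type) [Fintype β] :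
    ∑ E : Setoid β, descPochhammer ℝ (Nat.card (Quotient E))
      = X ^ (Fintype.card β) := by
  rw [← sub_eq_zero]
  apply Polynomial.eq_zero_of_infinite_isRoot
  apply Set.Infinite.mono (s := Set.range ((↑) : ℕ → ℝ))
  · rintro x ⟨m, rfl⟩
    show IsRoot _ _
    rw [IsRoot.def, eval_sub, eval_finset_sum, eval_pow, eval_X, sub_eq_zero]
    have h2 : ∀ E : Setoid β, (descPochhammer ℝ (Nat.card (Quotient E))).eval ((m:ℕ):ℝ)
        = ((m.descFactorial (Nat.card (Quotient E)) : ℕ) : ℝ) :=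
      fun E => descPochhammer_eval_eq_descFactorial ℝ m _
    simp only [h2]
    exact_mod_cast congrArg (fun x : ℕ => (x : ℝ)) (card_fun_by_kernel_aux β m).symm
  · exact Set.infinite_range_of_injective Nat.cast_injective

/-- Key vanishing identity: the sum over all partitions of a set of size `≥ 2` of
`(-1)^{|E|-1} (|E|-1)!` vanishes. -/
lemma key_vanish_aux (β : Type) [Fintype β] (hβ : 2 ≤ Fintype.card β) :
    ∑ E : Setoid β, ((-1:ℝ)) ^ (Nat.card (Quotient E) - 1)
      * (Nat.card (Quotient E) - 1).factorial = 0 := by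
  have hne : Nonempty β := Fintype.card_pos_iff.mp (by omega)
  have h := congrArg (fun p : ℝ[X] => p.coeff 1) (sum_descPochhammer_eq_aux β)
  simp only [finset_sum_coeff, coeff_X_pow] at h
  rw [if_neg (by omega)] at h
  rw [← h]
  refine Finset.sum_congr rfl fun E _ => ?_
  haveI : Finite (Quotient E) := Quotient.finite E
  haveI : Nonempty (Quotient E) := ⟨⟦Classical.arbitrary β⟧⟩
  have hpos : 1 ≤ Nat.card (Quotient E) := Nat.card_pos
  obtain ⟨k, hk⟩ : ∃ k, Nat.card (Quotient E) = k + 1 :=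
    ⟨Nat.card (Quotient E) - 1, by omega⟩
  rw [hk]
  simp [coeff_one_descPochhammer_aux]

/-- Quotienting by the corresponding partition of the quotient preserves the number
of blocks. -/
lemma quot_card_corr_aux {α : Type} (C : Setoid α) (D : {s : Setoid α // C ≤ s}) :
    Nat.card (Quotient ((Setoid.correspondence C).toEquiv D)) = Nat.card (Quotient D.1) := by
  have hg : ∀ x y : Quotient C, ((Setoid.correspondence C) D).r x y →
      Quotient.lift (Quotient.mk D.1) (fun a b h => Quotient.sound (D.2 h)) x
        = Quotient.lift (Quotient.mk D.1) (fun a b h => Quotient.sound (D.2 h)) y := by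
    intro x y
    induction x using Quotient.ind
    induction y using Quotient.ind
    intro h
    exact Quotient.sound h
  apply Nat.card_eq_of_bijective (Quotient.lift _ hg)
  constructor
  · intro x y h
    induction x using Quotient.ind with | _ x => ?_
    induction y using Quotient.ind with | _ y => ?_
    induction x using Quotient.ind with | _ a => ?_
    induction y using Quotient.ind with | _ b => ?_
    exact Quotient.sound (show D.1.r a b from
      Quotient.exact (show (⟦a⟧ : Quotient D.1) = ⟦b⟧ from h))
  · intro z
    induction z using Quotient.ind with | _ a => ?_
    exact ⟨⟦⟦a⟧⟧, rfl⟩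

/-- The incidence ("zeta") matrix of a finite partial order has unit determinant. -/
lemma zeta_det_isUnit_aux (P : Type) [Fintype P] [PartialOrder P] :
    IsUnit (Matrix.of (fun A B : P => if A ≤ B then (1:ℝ) else 0)).det := by
  classical
  letI : Fintype (LinearExtension P) := ‹Fintype P›
  let e1 : Fin (Fintype.card (LinearExtension P)) ≃o LinearExtension P :=
    monoEquivOfFin _ rfl
  let e : Fin (Fintype.card (LinearExtension P)) ≃ P := e1.toEquiv
  rw [← Matrix.det_submatrix_equiv_self e]
  have htri : (((Matrix.of (fun A B : P => if A ≤ B then (1:ℝ) else 0))).submatrix e e).BlockTriangular id := by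
    intro i j hji
    simp only [Matrix.submatrix_apply, Matrix.of_apply]
    rw [if_neg]
    intro hle
    exact absurd (e1.le_iff_le.mp (by exact (toLinearExtension (α := P)).monotone' hle))
      (not_le.mpr hji)
  rw [Matrix.det_of_upperTriangular htri]
  refine isUnit_iff_ne_zero.mpr (Finset.prod_ne_zero_iff.mpr fun i _ => ?_)
  simp

/-- The Möbius-type summation identity over the partition lattice. -/
lemma sum_nu_aux {α : Type} [Fintype α] [Nonempty α] (C : Setoid α) :
    ∑ D : Setoid α, (if C ≤ D then
        ((-1:ℝ)) ^ (nblocks D - 1) * (nblocks D - 1).factorial else 0)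
      = if C = ⊤ then 1 else 0 := by
  classical
  rw [← Finset.sum_filter]
  rw [Finset.sum_subtype (Finset.univ.filter (fun D => C ≤ D))
    (p := fun D => C ≤ D) (fun x => by simp)]
  haveI : Finite (Quotient C) := Quotient.finite C
  rw [Fintype.sum_equiv (Setoid.correspondence C).toEquiv
    (fun D => ((-1:ℝ)) ^ (nblocks D.1 - 1) * (nblocks D.1 - 1).factorial)
    (fun E => ((-1:ℝ)) ^ (Nat.card (Quotient E) - 1) * (Nat.card (Quotient E) - 1).factorial)
    (fun D => by simp only [nblocks, quot_card_corr_aux C D])]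
  haveI : Nonempty (Quotient C) := ⟨⟦Classical.arbitrary α⟧⟩
  by_cases hC : C = ⊤
  · rw [if_pos hC]
    haveI hsub : Subsingleton (Quotient C) := Quotient.subsingleton_iff.mpr hC
    have hterm : ∀ E : Setoid (Quotient C),
        ((-1:ℝ)) ^ (Nat.card (Quotient E) - 1)
          * (Nat.card (Quotient E) - 1).factorial = 1 := by
      intro E
      haveI : Subsingleton (Quotient E) :=
        ⟨fun x y => by
          induction x using Quotient.ind
          induction y using Quotient.ind
          exact congrArg _ (Subsingleton.elim _ _)⟩
      haveI : Nonempty (Quotient E) := ⟨⟦⟦Classical.arbitrary α⟧⟧⟩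
      rw [Nat.card_eq_one_iff_unique.mpr ⟨inferInstance, inferInstance⟩]
      simp
    rw [Finset.sum_congr rfl (fun E _ => hterm E), Finset.sum_const, nsmul_eq_mul, mul_one]
    have hone : Fintype.card (Setoid (Quotient C)) = 1 :=
      Fintype.card_eq_one_iff.mpr ⟨⊤, fun E => Setoid.ext fun a b =>
        ⟨fun _ => trivial, fun _ => (Subsingleton.elim a b) ▸ E.refl a⟩⟩
    rw [Finset.card_univ, hone]
    norm_num
  · rw [if_neg hC]
    apply key_vanish_aux
    have hns : ¬ Subsingleton (Quotient C) := fun h => hC (Quotient.subsingleton_iff.mp h)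
    have : Nontrivial (Quotient C) := not_subsingleton_iff_nontrivial.mp hns
    exact Fintype.one_lt_card_iff_nontrivial.mpr this

end AmatAux

/-- the connectivity matrix `A_n` is invertible for every `n ≥ 1`. -/
theorem Amat_invertible
    (U : Type) [Fintype U] (n : ℕ) (hn : 1 ≤ n) (hcard : Fintype.card U = n) :
    IsUnit (Amat U) := by
  classical
  haveI hne : Nonempty U := Fintype.card_pos_iff.mp (by omega)
  set Z : Matrix (Setoid U) (Setoid U) ℝ :=
    Matrix.of (fun A B => if A ≤ B then (1:ℝ) else 0) with hZdef
  set d : Setoid U → ℝ :=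
    fun C => (-1:ℝ) ^ (nblocks C - 1) * (nblocks C - 1).factorial with hddef
  have hfact : Amat U = Z * Matrix.diagonal d * Z.transpose := by
    ext A B
    have hrhs : (Z * Matrix.diagonal d * Z.transpose) A B
        = ∑ C : Setoid U, (if A ⊔ B ≤ C then
            ((-1:ℝ)) ^ (nblocks C - 1) * (nblocks C - 1).factorial else 0) := by
      rw [Matrix.mul_apply]
      refine Finset.sum_congr rfl fun C _ => ?_
      rw [Matrix.mul_diagonal, Matrix.transpose_apply]
      simp only [hZdef, Matrix.of_apply, hddef, sup_le_iff]
      by_cases h1 : A ≤ C <;> by_cases h2 : B ≤ C <;> simp [h1, h2]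
    rw [hrhs, sum_nu_aux (A ⊔ B)]
    have hiff : nblocks (A ⊔ B) = 1 ↔ A ⊔ B = ⊤ := by
      rw [nblocks, Nat.card_eq_one_iff_unique]
      constructor
      · rintro ⟨hs, _⟩
        exact Quotient.subsingleton_iff.mp hs
      · intro h
        exact ⟨Quotient.subsingleton_iff.mpr h, ⟨⟦Classical.arbitrary U⟧⟩⟩
    show (if nblocks (A ⊔ B) = 1 then (1:ℝ) else 0) = _
    by_cases h : A ⊔ B = ⊤
    · rw [if_pos (hiff.mpr h), if_pos h]
    · rw [if_neg (fun hh => h (hiff.mp hh)), if_neg h]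
  rw [hfact]
  have hD : IsUnit (Matrix.diagonal d) := by
    rw [Matrix.isUnit_iff_isUnit_det, Matrix.det_diagonal]
    refine isUnit_iff_ne_zero.mpr (Finset.prod_ne_zero_iff.mpr fun C _ => ?_)
    exact mul_ne_zero (pow_ne_zero _ (by norm_num))
      (Nat.cast_ne_zero.mpr (Nat.factorial_ne_zero _))
  have hZ : IsUnit Z := by
    rw [Matrix.isUnit_iff_isUnit_det]
    exact zeta_det_isUnit_aux (Setoid U)
  exact (hZ.mul hD).mul (by
    rw [Matrix.isUnit_iff_isUnit_det, Matrix.det_transpose,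
      ← Matrix.isUnit_iff_isUnit_det]
    exact hZ)
end
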